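/- Let d ≥ 1 and let φ : ℝ^d → ℝ be differentiable, α-strongly convex and β-smooth with 0 < α ≤ β. Then the Bregman divergence satisfies the quasi-triangle inequality: for all x, y, z ∈ ℝ^d, D_φ(x,y)^{1/2} ≤ √(β/α) · ( D_φ(x,z)^{1/2} + D_φ(z,y)^{1/2} ). -/
import Mathlib


open scoped RealInnerProductSpace BigOperators

noncomputable def breg {d : ℕ} (φ : EuclideanSpace ℝ (Fin d) → ℝ)
    (x y : EuclideanSpace ℝ (Fin d)) : ℝ :=
  φ x - φ y - ⟪gradient φ y, x - y⟫

/-- quasi-triangle inequality for the Bregman divergence of a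
differentiable, `α`-strongly convex and `β`-smooth potential. -/
theorem bregman_quasi_triangle (d : ℕ) (hd : 1 ≤ d)
    (φ : EuclideanSpace ℝ (Fin d) → ℝ) (hφ : Differentiable ℝ φ)
    (α β : ℝ) (hα : 0 < α) (hαβ : α ≤ β)
    (hsc : ∀ x y : EuclideanSpace ℝ (Fin d),
      φ y ≥ φ x + ⟪gradient φ x, y - x⟫ + α / 2 * ‖y - x‖ ^ 2)
    (hβ : ∀ x y : EuclideanSpace ℝ (Fin d),
      ‖gradient φ x - gradient φ y‖ ≤ β * ‖x - y‖) :
    ∀ x y z : EuclideanSpace ℝ (Fin d),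
      Real.sqrt (breg φ x y)
        ≤ Real.sqrt (β / α) * (Real.sqrt (breg φ x z) + Real.sqrt (breg φ z y)) := by
  intro x y z
  have hβ0 : (0:ℝ) < β := lt_of_lt_of_le hα hαβ
  -- strong convexity lower bound
  have hlow : ∀ a b : EuclideanSpace ℝ (Fin d),
      α / 2 * ‖a - b‖ ^ 2 ≤ breg φ a b := by
    intro a b
    have := hsc b a
    simp only [breg]
    linarith
  have hnn : ∀ a b : EuclideanSpace ℝ (Fin d), 0 ≤ breg φ a b := by
    intro a b
    have := hlow a b
    nlinarith [sq_nonneg ‖a - b‖, hα.le]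
  set A := Real.sqrt (breg φ x z) with hAdef
  set B := Real.sqrt (breg φ z y) with hBdef
  have hA0 : 0 ≤ A := Real.sqrt_nonneg _
  have hB0 : 0 ≤ B := Real.sqrt_nonneg _
  have hA2 : A ^ 2 = breg φ x z := Real.sq_sqrt (hnn x z)
  have hB2 : B ^ 2 = breg φ z y := Real.sq_sqrt (hnn z y)
  -- norm bounds
  have hnormA : ‖x - z‖ ≤ Real.sqrt (2 / α) * A := by
    have h1 : ‖x - z‖ ^ 2 ≤ 2 / α * A ^ 2 := by
      rw [hA2]
      have := hlow x z
      rw [div_mul_eq_mul_div, le_div_iff₀ hα]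
      nlinarith
    calc ‖x - z‖ = Real.sqrt (‖x - z‖ ^ 2) := (Real.sqrt_sq (norm_nonneg _)).symm
      _ ≤ Real.sqrt (2 / α * A ^ 2) := Real.sqrt_le_sqrt h1
      _ = Real.sqrt (2 / α) * A := by
          rw [Real.sqrt_mul (by positivity), Real.sqrt_sq hA0]
  have hnormB : ‖z - y‖ ≤ Real.sqrt (2 / α) * B := by
    have h1 : ‖z - y‖ ^ 2 ≤ 2 / α * B ^ 2 := by
      rw [hB2]
      have := hlow z y
      rw [div_mul_eq_mul_div, le_div_iff₀ hα]
      nlinarith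
    calc ‖z - y‖ = Real.sqrt (‖z - y‖ ^ 2) := (Real.sqrt_sq (norm_nonneg _)).symm
      _ ≤ Real.sqrt (2 / α * B ^ 2) := Real.sqrt_le_sqrt h1
      _ = Real.sqrt (2 / α) * B := by
          rw [Real.sqrt_mul (by positivity), Real.sqrt_sq hB0]
  -- three-point identity
  have h3pt : breg φ x y = breg φ x z + breg φ z y
      + ⟪gradient φ z - gradient φ y, x - z⟫ := by
    simp only [breg, inner_sub_left, inner_sub_right]
    ring
  -- bound the inner product term
  have hip : ⟪gradient φ z - gradient φ y, x - z⟫ ≤ β * ‖z - y‖ * ‖x - z‖ := by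
    calc ⟪gradient φ z - gradient φ y, x - z⟫
        ≤ ‖gradient φ z - gradient φ y‖ * ‖x - z‖ := real_inner_le_norm _ _
      _ ≤ (β * ‖z - y‖) * ‖x - z‖ :=
          mul_le_mul_of_nonneg_right (hβ z y) (norm_nonneg _)
      _ = β * ‖z - y‖ * ‖x - z‖ := by ring
  have hsq : Real.sqrt (2 / α) * Real.sqrt (2 / α) = 2 / α :=
    Real.mul_self_sqrt (by positivity)
  have hcross : β * ‖z - y‖ * ‖x - z‖ ≤ 2 * β / α * B * A := by
    have h1 : ‖z - y‖ * ‖x - z‖ ≤ (Real.sqrt (2 / α) * B) * (Real.sqrt (2 / α) * A) :=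
      mul_le_mul hnormB hnormA (norm_nonneg _) (by positivity)
    have h2 : (Real.sqrt (2 / α) * B) * (Real.sqrt (2 / α) * A) = 2 / α * B * A := by
      rw [show (Real.sqrt (2 / α) * B) * (Real.sqrt (2 / α) * A)
          = (Real.sqrt (2 / α) * Real.sqrt (2 / α)) * (B * A) by ring, hsq]; ring
    have h3 : ‖z - y‖ * ‖x - z‖ ≤ 2 / α * B * A := h2 ▸ h1
    calc β * ‖z - y‖ * ‖x - z‖ = β * (‖z - y‖ * ‖x - z‖) := by ring
      _ ≤ β * (2 / α * B * A) := mul_le_mul_of_nonneg_left h3 hβ0.le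
      _ = 2 * β / α * B * A := by ring
  -- main bound
  have hmain : breg φ x y ≤ β / α * (A + B) ^ 2 := by
    have hratio : (1:ℝ) ≤ β / α := (one_le_div hα).mpr hαβ
    have h1 : breg φ x y ≤ A ^ 2 + B ^ 2 + 2 * β / α * B * A := by
      rw [h3pt, hA2, hB2]
      linarith [le_trans hip hcross]
    have hkey : 0 ≤ (β / α - 1) * (A ^ 2 + B ^ 2) :=
      mul_nonneg (by linarith) (by positivity)
    have : 2 * β / α * B * A = β / α * (2 * B * A) := by ring
    nlinarith [hkey]
  calc Real.sqrt (breg φ x y) ≤ Real.sqrt (β / α * (A + B) ^ 2) := Real.sqrt_le_sqrt hmain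
    _ = Real.sqrt (β / α) * (A + B) := by
        rw [Real.sqrt_mul (by positivity), Real.sqrt_sq (by positivity)]
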